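/- Let T be a tree, T_G ⊆ T a subtree with nearest point projection P, and suppose there is a constant D > 0 and a family of subtrees {T_k}_{k=0}^{2n} of T with T_k ∩ T_{k+1} ≠ ∅ for all k, such that diam(P(σ)) ≤ D for every geodesic σ contained in some T_k. If t ∈ T_0 ∩ T_G and t' ∈ T_{2n} ∩ T_G, then d_T(t, t') ≤ (2n+1)·D. -/

import Mathlib

def IsSubtree {V : Type*} (T : SimpleGraph V) (S : Set V) : Prop :=
  S.Nonempty ∧ ∀ ⦃u v : V⦄, u ∈ S → v ∈ S →
    ∀ (p : T.Walk u v), p.IsPath → ∀ w ∈ p.support, w ∈ S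

/-- Chaining subtrees `T_0, …, T_{2n}` with consecutive nonempty
intersections, where the nearest point projection `P` to the subtree `T_G` has image
of diameter at most `D` on every geodesic contained in one of the `T_k`, bounds the
distance between points of `T_0 ∩ T_G` and `T_{2n} ∩ T_G` by `(2n+1)·D`. -/
theorem stmt4 {V : Type*} (T : SimpleGraph V) (hT : T.IsTree)
    (TG : Set V) (hTG : IsSubtree T TG)
    (P : V → V)
    (hP : ∀ v : V, P v ∈ TG ∧ ∀ w ∈ TG, T.dist v (P v) ≤ T.dist v w)
    (D : ℕ) (hD : 0 < D) (n : ℕ)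
    (Tk : Fin (2 * n + 1) → Set V)
    (hsub : ∀ k, IsSubtree T (Tk k))
    (hchain : ∀ k : Fin (2 * n + 1), ∀ hk : (k : ℕ) + 1 < 2 * n + 1,
      (Tk k ∩ Tk ⟨(k : ℕ) + 1, hk⟩).Nonempty)
    (hproj : ∀ (k : Fin (2 * n + 1)) (u v : V) (p : T.Walk u v), p.IsPath →
      (∀ w ∈ p.support, w ∈ Tk k) →
      ∀ a ∈ p.support, ∀ b ∈ p.support, T.dist (P a) (P b) ≤ D)
    (t t' : V)
    (ht : t ∈ Tk ⟨0, by omega⟩ ∩ TG)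
    (ht' : t' ∈ Tk ⟨2 * n, by omega⟩ ∩ TG) :
    T.dist t t' ≤ (2 * n + 1) * D := by
  classical
  have hconn := hT.isConnected
  -- P fixes points of TG
  have hfix : ∀ v ∈ TG, P v = v := by
    intro v hv
    have h := (hP v).2 v hv
    rw [SimpleGraph.dist_self] at h
    have := Nat.le_zero.mp h
    exact ((hconn.dist_eq_zero_iff).mp this).symm
  -- chain points
  set y : ℕ → V := fun k =>
    if h0 : k = 0 then t
    else if h : k < 2 * n + 1 then
      (hchain ⟨k - 1, by omega⟩ (by simp; omega)).choose
    else t' with hy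
  have hy0 : y 0 = t := by simp [hy]
  have hylast : y (2 * n + 1) = t' := by simp [hy]
  have hmem : ∀ k (hk : 1 ≤ k) (hk2 : k < 2 * n + 1),
      y k ∈ Tk ⟨k - 1, by omega⟩ ∩ Tk ⟨k, by omega⟩ := by
    intro k hk hk2
    have h := (hchain ⟨k - 1, by omega⟩ (by simp; omega)).choose_spec
    have hyk : y k = (hchain ⟨k - 1, by omega⟩ (by simp; omega)).choose := by
      simp [hy, Nat.pos_iff_ne_zero.mp hk, hk2, show k ≤ 2 * n by omega]
    rw [hyk]
    refine ⟨h.1, ?_⟩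
    have ememb : ∀ (a b : Fin (2 * n + 1)) (x : V), (a : ℕ) = (b : ℕ) → x ∈ Tk a → x ∈ Tk b := by
      intro a b x hab hx
      cases Fin.ext hab
      exact hx
    refine ememb _ ⟨k, by omega⟩ _ ?_ h.2
    show k - 1 + 1 = k
    omega
  -- each consecutive pair lies in Tk k
  have hstep : ∀ k, k ≤ 2 * n → T.dist (P (y k)) (P (y (k + 1))) ≤ D := by
    intro k hk
    have hku : y k ∈ Tk ⟨k, by omega⟩ := by
      rcases Nat.eq_zero_or_pos k with h0 | h0
      · subst h0; rw [hy0]; exact ht.1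
      · exact (hmem k h0 (by omega)).2
    have hkv : y (k + 1) ∈ Tk ⟨k, by omega⟩ := by
      rcases Nat.lt_or_ge k (2 * n) with h0 | h0
      · have := (hmem (k + 1) (by omega) (by omega)).1
        simpa using this
      · have hk2 : k = 2 * n := by omega
        subst hk2
        rw [hylast]
        exact ht'.1
    obtain ⟨w⟩ := hconn (y k) (y (k + 1))
    let p := w.toPath
    have hsupp : ∀ z ∈ p.1.support, z ∈ Tk ⟨k, by omega⟩ :=
      (hsub ⟨k, by omega⟩).2 hku hkv p.1 p.2
    exact hproj ⟨k, by omega⟩ _ _ p.1 p.2 hsupp (y k) p.1.start_mem_support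
      (y (k + 1)) p.1.end_mem_support
  -- telescoping
  have htel : ∀ m, m ≤ 2 * n + 1 → T.dist (P (y 0)) (P (y m)) ≤ m * D := by
    intro m
    induction m with
    | zero => intro _; simp
    | succ m ih =>
      intro hm
      calc T.dist (P (y 0)) (P (y (m + 1)))
          ≤ T.dist (P (y 0)) (P (y m)) + T.dist (P (y m)) (P (y (m + 1))) :=
            hconn.dist_triangle
        _ ≤ m * D + D := Nat.add_le_add (ih (by omega)) (hstep m (by omega))
        _ = (m + 1) * D := by ring
  have := htel (2 * n + 1) le_rfl
  rw [hy0, hylast, hfix t ht.2, hfix t' ht'.2] at this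
  exact this
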